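/- The semiring M₂ satisfies the identity u ≈ v if and only if C(u) = C(v). -/

import Mathlib

/-- The value in `Bool` (under multiplication `mul` and assignment `φ`) of a word,
i.e. a nonempty list of variables: the product of the images of its letters, in order.
(The value `false` on the empty list is junk; words are required to be nonempty.) -/
def wordVal (mul : Bool → Bool → Bool) (φ : ℕ → Bool) : List ℕ → Bool
  | [] => false
  | a :: rest => rest.foldl (fun acc x => mul acc (φ x)) (φ a)

/-- The value of a term, i.e. a nonempty list of words: the sum (under `add`) of the
values of its entries. (The value `false` on the empty list is junk; terms are
required to be nonempty.) -/
def termVal (add mul : Bool → Bool → Bool) (φ : ℕ → Bool) : List (List ℕ) → Bool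
  | [] => false
  | w :: rest => rest.foldl (fun acc q => add acc (wordVal mul φ q)) (wordVal mul φ w)

/-- The two-element semiring on `Bool` with addition `add` and multiplication `mul`
satisfies the identity `u ≈ v`. -/
def Satisfies (add mul : Bool → Bool → Bool) (u v : List (List ℕ)) : Prop :=
  ∀ φ : ℕ → Bool, termVal add mul φ u = termVal add mul φ v

private lemma foldl_or (φ : ℕ → Bool) (l : List ℕ) (b : Bool) :
    l.foldl (fun acc x => acc || φ x) b = (b || l.any φ) := by
  induction l generalizing b with
  | nil => simp
  | cons a t ih => simp [List.foldl_cons, ih, Bool.or_assoc]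

private lemma wordVal_or (φ : ℕ → Bool) (w : List ℕ) (hw : w ≠ []) :
    wordVal (fun x y => x || y) φ w = w.any φ := by
  cases w with
  | nil => simp at hw
  | cons a t => simp [wordVal, foldl_or]

private lemma foldl_or' (φ : ℕ → Bool) (l : List (List ℕ)) (b : Bool)
    (hl : ∀ w ∈ l, w ≠ []) :
    l.foldl (fun acc q => acc || wordVal (fun x y => x || y) φ q) b
      = (b || l.any (fun w => w.any φ)) := by
  induction l generalizing b with
  | nil => simp
  | cons a t ih =>
    simp only [List.foldl_cons, List.any_cons]
    rw [ih _ (fun w hw => hl w (List.mem_cons_of_mem _ hw)),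
      wordVal_or φ a (hl a List.mem_cons_self), Bool.or_assoc]

private lemma termVal_or (φ : ℕ → Bool) (u : List (List ℕ)) (hu : u ≠ [])
    (hu' : ∀ w ∈ u, w ≠ []) :
    termVal (fun x y => x || y) (fun x y => x || y) φ u
      = u.any (fun w => w.any φ) := by
  cases u with
  | nil => simp at hu
  | cons a t =>
    simp only [termVal, List.any_cons]
    rw [foldl_or' φ t _ (fun w hw => hu' w (List.mem_cons_of_mem _ hw)),
      wordVal_or φ a (hu' a List.mem_cons_self)]

/-- Lemma 1.1(3): `M₂` (addition `∨`, multiplication `∨`) satisfies `u ≈ v`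
iff `C(u) = C(v)`, where `C` is the set of all variables occurring. -/
theorem M2_satisfies_iff (u v : List (List ℕ))
    (hu : u ≠ []) (hv : v ≠ []) (hu' : ∀ w ∈ u, w ≠ []) (hv' : ∀ w ∈ v, w ≠ []) :
    Satisfies (fun x y => x || y) (fun x y => x || y) u v ↔
      {n : ℕ | ∃ w ∈ u, n ∈ w} = {n : ℕ | ∃ w ∈ v, n ∈ w} := by
  have key : ∀ φ, termVal (fun x y => x || y) (fun x y => x || y) φ u
      = u.any (fun w => w.any φ) := fun φ => termVal_or φ u hu hu'
  have key' : ∀ φ, termVal (fun x y => x || y) (fun x y => x || y) φ v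
      = v.any (fun w => w.any φ) := fun φ => termVal_or φ v hv hv'
  constructor
  · intro hsat
    ext n
    simp only [Set.mem_setOf_eq]
    have h := hsat (fun m => decide (m = n))
    rw [key, key'] at h
    replace h : (u.any fun w => w.any fun m => decide (m = n)) = true ↔
        (v.any fun w => w.any fun m => decide (m = n)) = true := by rw [h]
    simp only [List.any_eq_true, decide_eq_true_eq] at h
    constructor
    · intro ⟨w, hw, hn⟩
      have : ∃ w ∈ u, ∃ m ∈ w, m = n := ⟨w, hw, n, hn, rfl⟩
      rw [h] at this
      obtain ⟨w', hw', m, hm, rfl⟩ := this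
      exact ⟨w', hw', hm⟩
    · intro ⟨w, hw, hn⟩
      have : ∃ w ∈ v, ∃ m ∈ w, m = n := ⟨w, hw, n, hn, rfl⟩
      rw [← h] at this
      obtain ⟨w', hw', m, hm, rfl⟩ := this
      exact ⟨w', hw', hm⟩
  · intro hC φ
    rw [key, key']
    have : (∃ w ∈ u, ∃ m ∈ w, φ m = true) ↔ (∃ w ∈ v, ∃ m ∈ w, φ m = true) := by
      constructor
      · intro ⟨w, hw, m, hm, hφ⟩
        have : m ∈ {n : ℕ | ∃ w ∈ v, n ∈ w} := hC ▸ ⟨w, hw, hm⟩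
        obtain ⟨w', hw', hm'⟩ := this
        exact ⟨w', hw', m, hm', hφ⟩
      · intro ⟨w, hw, m, hm, hφ⟩
        have : m ∈ {n : ℕ | ∃ w ∈ u, n ∈ w} := hC.symm ▸ ⟨w, hw, hm⟩
        obtain ⟨w', hw', hm'⟩ := this
        exact ⟨w', hw', m, hm', hφ⟩
    exact Bool.coe_iff_coe.mp (by simpa [List.any_eq_true] using this)
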